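/- arXiv:0805.1859 — 3 statements merged into one kernel-verified Lean document; each statement's English description precedes it below -/
import Mathlib

section
/- Let N be a phylogenetic network consistent with a triplet set T with L(T) = L(N), and let (u,v) be a cut-arc of N. Then the set S of leaves of N below (u,v) is an SN-set of T; that is, there is no triplet xy|z ∈ T with x,z ∈ S and y ∉ S. -/
/-!
Common definitions for formalizing "Constructing the Simplest Possible
Phylogenetic Network from Triplets" (van Iersel, Kelk).

A directed graph on a vertex type `V` is given by its arc set `A : Set (V × V)`.
-/

namespace Phylo

variable {V L : Type}

/-- In-degree of a vertex. -/
noncomputable def indeg (A : Set (V × V)) (v : V) : ℕ := {u | (u, v) ∈ A}.ncard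

/-- Out-degree of a vertex. -/
noncomputable def outdeg (A : Set (V × V)) (v : V) : ℕ := {w | (v, w) ∈ A}.ncard

/-- The root: indegree 0 and outdegree 2. -/
def IsRoot (A : Set (V × V)) (v : V) : Prop := indeg A v = 0 ∧ outdeg A v = 2

/-- A split vertex: indegree 1 and outdegree 2. -/
def IsSplit (A : Set (V × V)) (v : V) : Prop := indeg A v = 1 ∧ outdeg A v = 2

/-- A reticulation vertex: indegree 2 and outdegree 1. -/
def IsRetic (A : Set (V × V)) (v : V) : Prop := indeg A v = 2 ∧ outdeg A v = 1

/-- A leaf vertex: indegree 1 and outdegree 0. -/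
def IsLeafV (A : Set (V × V)) (v : V) : Prop := indeg A v = 1 ∧ outdeg A v = 0

/-- Directed reachability (reflexive-transitive closure of the arc relation). -/
def Reaches (A : Set (V × V)) : V → V → Prop :=
  Relation.ReflTransGen fun u v => (u, v) ∈ A

/-- A directed graph is acyclic if it has no directed cycle. -/
def Acyclic (A : Set (V × V)) : Prop := ∀ u v, (u, v) ∈ A → ¬ Reaches A v u

/-- Adjacency in the underlying undirected graph. -/
def UAdj (A : Set (V × V)) (u v : V) : Prop := (u, v) ∈ A ∨ (v, u) ∈ A

/-- The underlying undirected graph is connected (on all of `V`). -/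
def ConnectedGraph (A : Set (V × V)) : Prop :=
  ∀ u v : V, Relation.ReflTransGen (UAdj A) u v

/-- Undirected connectivity within a set `S` of vertices (in the induced subgraph). -/
def ConnWithin (A : Set (V × V)) (S : Set V) : Prop :=
  ∀ u ∈ S, ∀ v ∈ S, Relation.ReflTransGen (fun a b => a ∈ S ∧ b ∈ S ∧ UAdj A a b) u v

/-- A set of at least two vertices inducing a biconnected subgraph: it is connected
and stays connected after removal of any single vertex. -/
def Biconnected (A : Set (V × V)) (S : Set V) : Prop :=
  2 ≤ S.ncard ∧ ConnWithin A S ∧ ∀ w ∈ S, ConnWithin A (S \ {w})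

/-- A biconnected component: a maximal biconnected subgraph. -/
def BiconnComp (A : Set (V × V)) (S : Set V) : Prop :=
  Biconnected A S ∧ ∀ S', Biconnected A S' → S ⊆ S' → S' = S

/-- The arcs leaving a set of vertices. -/
def outArcs (A : Set (V × V)) (S : Set V) : Set (V × V) :=
  {a ∈ A | a.1 ∈ S ∧ a.2 ∉ S}

/-- A phylogenetic network on the (finite) vertex type `V` with leaves labelled by
elements of `L`: a directed acyclic graph with exactly one vertex of indegree 0
and outdegree 2 (the root), all other vertices being split vertices, reticulation
vertices or leaves; leaves are distinctly labelled.  Moreover (to avoid redundant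
networks) every nontrivial biconnected component has at least three outgoing arcs. -/
structure PhyloNetwork (V L : Type) : Type where
  vfin : Finite V
  arcs : Set (V × V)
  lab : V → L
  acyclic : Acyclic arcs
  root_ex : ∃ r, IsRoot arcs r
  root_unique : ∀ r r', IsRoot arcs r → IsRoot arcs r' → r = r'
  vertex_type : ∀ v, IsRoot arcs v ∨ IsSplit arcs v ∨ IsRetic arcs v ∨ IsLeafV arcs v
  lab_inj : ∀ u v, IsLeafV arcs u → IsLeafV arcs v → lab u = lab v → u = v
  bicomp_out : ∀ S, BiconnComp arcs S → S.ncard ≠ 2 → 3 ≤ (outArcs arcs S).ncard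

/-- The set of leaf labels of a network. -/
def leafSet (N : PhyloNetwork V L) : Set L := {x | ∃ v, IsLeafV N.arcs v ∧ N.lab v = x}

/-- A directed path, as a nonempty list of distinct vertices consecutively joined by arcs. -/
def IsPath (A : Set (V × V)) (l : List V) : Prop :=
  l ≠ [] ∧ l.Nodup ∧ l.Chain' fun a b => (a, b) ∈ A

/-- A directed path from `u` to `v`. -/
def IsPathFromTo (A : Set (V × V)) (l : List V) (u v : V) : Prop :=
  IsPath A l ∧ l.head? = some u ∧ l.getLast? = some v

/-- `w` is an endpoint of the path `l`. -/
def IsEndpoint (l : List V) (w : V) : Prop := l.head? = some w ∨ l.getLast? = some w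

/-- Two paths are internally vertex-disjoint: any common vertex is an endpoint of both. -/
def IntDisjoint (p q : List V) : Prop :=
  ∀ w, w ∈ p → w ∈ q → IsEndpoint p w ∧ IsEndpoint q w

/-- An embedding of the triplet `xy|z` with summit `p` and cherry vertex `q`:
pairwise internally vertex-disjoint directed paths `q→x`, `q→y`, `p→q`, `p→z`. -/
def HasEmbedding (A : Set (V × V)) (p q x y z : V) : Prop :=
  p ≠ q ∧ ∃ Pqx Pqy Ppq Ppz : List V,
    IsPathFromTo A Pqx q x ∧ IsPathFromTo A Pqy q y ∧
    IsPathFromTo A Ppq p q ∧ IsPathFromTo A Ppz p z ∧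
    IntDisjoint Pqx Pqy ∧ IntDisjoint Pqx Ppq ∧ IntDisjoint Pqx Ppz ∧
    IntDisjoint Pqy Ppq ∧ IntDisjoint Pqy Ppz ∧ IntDisjoint Ppq Ppz

/-- The triplet `xy|z` (on leaf labels) is consistent with the network `N`. -/
def ConsistentT (N : PhyloNetwork V L) (x y z : L) : Prop :=
  ∃ a b c : V, IsLeafV N.arcs a ∧ IsLeafV N.arcs b ∧ IsLeafV N.arcs c ∧
    N.lab a = x ∧ N.lab b = y ∧ N.lab c = z ∧ a ≠ b ∧ a ≠ c ∧ b ≠ c ∧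
    ∃ p q, HasEmbedding N.arcs p q a b c

/-- `T(N)`: the set of all triplets consistent with `N`
(the triple `(x,y,z)` codes the triplet `xy|z`). -/
def TN (N : PhyloNetwork V L) : Set (L × L × L) := {t | ConsistentT N t.1 t.2.1 t.2.2}

/-- `N` is consistent with every triplet in `T`. -/
def ConsistentSet (N : PhyloNetwork V L) (T : Set (L × L × L)) : Prop :=
  ∀ t ∈ T, ConsistentT N t.1 t.2.1 t.2.2

/-- `N` reflects `T` if `T(N) = T`. -/
def Reflects (N : PhyloNetwork V L) (T : Set (L × L × L)) : Prop := TN N = T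

/-- `L(T)`: the set of leaves occurring in a triplet set. -/
def tripletLeaves (T : Set (L × L × L)) : Set L :=
  {x | ∃ t ∈ T, x = t.1 ∨ x = t.2.1 ∨ x = t.2.2}

/-- `T` is a well-formed triplet set: in each triplet the three leaves are distinct, and
the coding is invariant under swapping the first two coordinates (`xy|z = yx|z`). -/
def IsTripletSet (T : Set (L × L × L)) : Prop :=
  ∀ t ∈ T, (t.2.1, t.1, t.2.2) ∈ T ∧ t.1 ≠ t.2.1 ∧ t.1 ≠ t.2.2 ∧ t.2.1 ≠ t.2.2

/-- `T` is dense: for any three distinct leaves at least one triplet on them is present. -/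
def DenseT (T : Set (L × L × L)) : Prop :=
  ∀ x ∈ tripletLeaves T, ∀ y ∈ tripletLeaves T, ∀ z ∈ tripletLeaves T,
    x ≠ y → x ≠ z → y ≠ z → (x, y, z) ∈ T ∨ (x, z, y) ∈ T ∨ (y, z, x) ∈ T

/-- `S` is an SN-set of `T` with respect to the leaf set `U`: `S ⊆ U` and there is
no triplet `xy|z ∈ T` with `x, z ∈ S` and `y ∉ S`. -/
def SNSetOn (T : Set (L × L × L)) (U S : Set L) : Prop :=
  S ⊆ U ∧ ¬ ∃ x y z, (x, y, z) ∈ T ∧ x ∈ S ∧ z ∈ S ∧ y ∉ S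

/-- `S` is an SN-set of `T`. -/
def SNSet (T : Set (L × L × L)) (S : Set L) : Prop := SNSetOn T (tripletLeaves T) S

/-- `S` is a maximal SN-set: a nontrivial SN-set not strictly contained
in any nontrivial SN-set. -/
def MaxSNSet (T : Set (L × L × L)) (S : Set L) : Prop :=
  SNSet T S ∧ S ≠ tripletLeaves T ∧
    ∀ S', SNSet T S' → S' ≠ tripletLeaves T → S ⊆ S' → S' = S

/-- `S` is an SN-set maximal under the restriction of not containing `B`. -/
def MaxSNAvoid (T : Set (L × L × L)) (B S : Set L) : Prop :=
  SNSet T S ∧ ¬ B ⊆ S ∧ ∀ S', SNSet T S' → ¬ B ⊆ S' → S ⊆ S' → S' = S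

/-- `T|S`: the triplets of `T` all of whose leaves lie in `S`. -/
def restrictT (T : Set (L × L × L)) (S : Set L) : Set (L × L × L) :=
  {t ∈ T | t.1 ∈ S ∧ t.2.1 ∈ S ∧ t.2.2 ∈ S}

/-- A cut-arc: an arc whose removal disconnects the underlying undirected graph. -/
def CutArc (A : Set (V × V)) (a : V × V) : Prop :=
  a ∈ A ∧ ¬ ConnectedGraph (A \ {a})

/-- A simple network: it contains a reticulation vertex and all its cut-arcs are
trivial (i.e. end in a leaf). -/
def SimpleNet (N : PhyloNetwork V L) : Prop :=
  (∃ v, IsRetic N.arcs v) ∧ ∀ a, CutArc N.arcs a → IsLeafV N.arcs a.2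

/-- A level-`k` network: every biconnected component contains at most `k`
reticulation vertices. -/
def IsLevel (N : PhyloNetwork V L) (k : ℕ) : Prop :=
  ∀ S, BiconnComp N.arcs S → {v ∈ S | IsRetic N.arcs v}.ncard ≤ k

/-- The total number of reticulation vertices of a network. -/
noncomputable def numRetic (N : PhyloNetwork V L) : ℕ := {v | IsRetic N.arcs v}.ncard

/-- The level of a network: the smallest `k` such that it is a level-`k` network. -/
noncomputable def netLevel (N : PhyloNetwork V L) : ℕ := sInf {k | IsLevel N k}

/-- A highest cut-arc: a cut-arc not reachable from any other cut-arc. -/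
def HighestCutArc (A : Set (V × V)) (a : V × V) : Prop :=
  CutArc A a ∧ ∀ b, CutArc A b → b ≠ a → ¬ Reaches A b.2 a.1

/-- The set of leaf labels below a vertex `v`. -/
def leavesBelowV (N : PhyloNetwork V L) (v : V) : Set L :=
  {x | ∃ w, IsLeafV N.arcs w ∧ Reaches N.arcs v w ∧ N.lab w = x}

/-- An (undirected) cycle in the underlying undirected graph, as a list of at least
three distinct vertices that are consecutively adjacent, the last being adjacent
to the first. -/
def IsUCycle (A : Set (V × V)) (l : List V) : Prop :=
  3 ≤ l.length ∧ l.Nodup ∧ l.Chain' (UAdj A) ∧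
    ∃ u w, l.head? = some u ∧ l.getLast? = some w ∧ UAdj A w u

/-- A highest reticulation: a reticulation lying on a cycle through the root. -/
def HighestRetic (N : PhyloNetwork V L) (r : V) : Prop :=
  IsRetic N.arcs r ∧
    ∃ c, IsUCycle N.arcs c ∧ r ∈ c ∧ ∃ rt, IsRoot N.arcs rt ∧ rt ∈ c

/-- `BHR(N)`: the set of leaves below a highest reticulation. -/
def BHR (N : PhyloNetwork V L) : Set L :=
  {x | ∃ r, HighestRetic N r ∧ x ∈ leavesBelowV N r}

/-- The collection of sets of leaves below the highest cut-arcs of `N`. -/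
def highCutArcLeafSets (N : PhyloNetwork V L) : Set (Set L) :=
  {S | ∃ a, HighestCutArc N.arcs a ∧ S = leavesBelowV N a.2}

/-- `CutInduce(N,T)`: the induced triplet set on the sets of leaves below the
highest cut-arcs of `N`. -/
def CutInduce (N : PhyloNetwork V L) (T : Set (L × L × L)) :
    Set (Set L × Set L × Set L) :=
  {t | t.1 ∈ highCutArcLeafSets N ∧ t.2.1 ∈ highCutArcLeafSets N ∧
       t.2.2 ∈ highCutArcLeafSets N ∧
       t.1 ≠ t.2.1 ∧ t.1 ≠ t.2.2 ∧ t.2.1 ≠ t.2.2 ∧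
       ∃ x ∈ t.1, ∃ y ∈ t.2.1, ∃ z ∈ t.2.2, (x, y, z) ∈ T}

/-- `T ∇ C`: the triplet set induced by a collection `C` of leaf sets. -/
def TInduced (T : Set (L × L × L)) (C : Set (Set L)) : Set (Set L × Set L × Set L) :=
  {t | t.1 ∈ C ∧ t.2.1 ∈ C ∧ t.2.2 ∈ C ∧
       t.1 ≠ t.2.1 ∧ t.1 ≠ t.2.2 ∧ t.2.1 ≠ t.2.2 ∧
       ∃ x ∈ t.1, ∃ y ∈ t.2.1, ∃ z ∈ t.2.2, (x, y, z) ∈ T}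

/-- A label-preserving isomorphism of networks. -/
def NetIso {V₁ V₂ L : Type} (N₁ : PhyloNetwork V₁ L) (N₂ : PhyloNetwork V₂ L) : Prop :=
  ∃ e : V₁ ≃ V₂, (∀ u v : V₁, (u, v) ∈ N₁.arcs ↔ (e u, e v) ∈ N₂.arcs) ∧
    ∀ v, IsLeafV N₁.arcs v → N₂.lab (e v) = N₁.lab v

/-- A (rooted, binary) phylogenetic tree given by its arc set: acyclic, a unique
vertex of indegree 0, every vertex of indegree at most 1 and outdegree 0 or 2.
(The single-vertex tree is allowed.) -/
def IsTreeArcs (A : Set (V × V)) : Prop :=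
  Acyclic A ∧ (∃! r, indeg A r = 0) ∧ (∀ v, indeg A v ≤ 1) ∧
    ∀ v, outdeg A v = 0 ∨ outdeg A v = 2

/-- The leaf labels of a tree (leaves are the vertices of outdegree 0). -/
def treeLeafSet (A : Set (V × V)) (lab : V → L) : Set L :=
  {x | ∃ v, outdeg A v = 0 ∧ lab v = x}

/-- The triplet `xy|z` is consistent with the tree given by `A` and labelling `lab`. -/
def TreeConsistentTriplet (A : Set (V × V)) (lab : V → L) (x y z : L) : Prop :=
  ∃ a b c : V, outdeg A a = 0 ∧ outdeg A b = 0 ∧ outdeg A c = 0 ∧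
    lab a = x ∧ lab b = y ∧ lab c = z ∧ a ≠ b ∧ a ≠ c ∧ b ≠ c ∧
    ∃ p q, HasEmbedding A p q a b c

/-- A CandidateTBR SN-set: an SN-set `S` of `T` such that `T|S` is consistent with
some phylogenetic tree on the leaf set `S`. -/
def CandidateTBR (T : Set (L × L × L)) (S : Set L) : Prop :=
  SNSet T S ∧ ∃ (V : Type) (_ : Finite V) (A : Set (V × V)) (lab : V → L),
    IsTreeArcs A ∧
    (∀ u v, outdeg A u = 0 → outdeg A v = 0 → lab u = lab v → u = v) ∧
    treeLeafSet A lab = S ∧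
    ∀ t ∈ restrictT T S, TreeConsistentTriplet A lab t.1 t.2.1 t.2.2

/-- `S'` is an SN-set of `T|S` (with leaf set `S`) that is maximal under the
restriction of being a nontrivial (proper) subset of `S`. -/
def MaxProperSN (T : Set (L × L × L)) (S S' : Set L) : Prop :=
  SNSetOn (restrictT T S) S S' ∧ S' ≠ S ∧
    ∀ S'', SNSetOn (restrictT T S) S S'' → S'' ≠ S → S' ⊆ S'' → S'' = S'

private lemma chain_reach {A : Set (V × V)} :
    ∀ (l : List V) (w t : V), l.Chain' (fun a b => (a, b) ∈ A) → w ∈ l →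
      l.getLast? = some t → Reaches A w t := by
  intro l
  induction l with
  | nil => simp
  | cons x xs ih =>
    intro w t hch hw hlast
    cases xs with
    | nil =>
      simp only [List.mem_singleton] at hw
      simp only [List.getLast?_singleton, Option.some.injEq] at hlast
      subst hw; subst hlast; exact Relation.ReflTransGen.refl
    | cons y ys =>
      rcases List.mem_cons.1 hw with rfl | hw
      · have h1 : (w, y) ∈ A := (List.isChain_cons_cons.1 hch).1
        have h2 := ih y t (List.isChain_cons_cons.1 hch).2 List.mem_cons_self
          (by simpa [List.getLast?_cons_cons] using hlast)
        exact Relation.ReflTransGen.head h1 h2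
      · exact ih w t (List.isChain_cons_cons.1 hch).2 hw
          (by simpa [List.getLast?_cons_cons] using hlast)

private lemma chain_reach_avoid {A : Set (V × V)} (e : V × V) :
    ∀ (l : List V) (s t : V), l.Chain' (fun a b => (a, b) ∈ A) →
      e.2 ∉ l → l.head? = some s → l.getLast? = some t →
      Relation.ReflTransGen (fun a b => (a, b) ∈ A ∧ (a, b) ≠ e) s t := by
  intro l
  induction l with
  | nil => simp
  | cons x xs ih =>
    intro s t hch hnv hhead hlast
    have hx : x = s := by simpa using hhead
    subst hx
    cases xs with
    | nil =>
      simp only [List.getLast?_singleton, Option.some.injEq] at hlast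
      subst hlast; exact Relation.ReflTransGen.refl
    | cons y ys =>
      have h1 : (x, y) ∈ A := (List.isChain_cons_cons.1 hch).1
      have hne : (x, y) ≠ e := by
        intro h
        exact hnv (by simp [← h])
      refine Relation.ReflTransGen.head ⟨h1, hne⟩
        (ih y t (List.isChain_cons_cons.1 hch).2
          (fun hm => hnv (List.mem_cons_of_mem _ hm)) rfl
          (by simpa [List.getLast?_cons_cons] using hlast))

private lemma reach_split {A : Set (V × V)} (e : V × V) {s t : V} (h : Reaches A s t) :
    Relation.ReflTransGen (fun a b => (a, b) ∈ A ∧ (a, b) ≠ e) s t ∨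
      (Reaches A s e.1 ∧
        Relation.ReflTransGen (fun a b => (a, b) ∈ A ∧ (a, b) ≠ e) e.2 t) := by
  induction h with
  | refl => exact Or.inl Relation.ReflTransGen.refl
  | @tail m t' hsm harc ih =>
    by_cases he : (m, t') = e
    · right
      refine ⟨?_, ?_⟩
      · have h1 : e.1 = m := by rw [← he]
        rw [h1]
        rcases ih with h' | ⟨h1', _⟩
        · exact Relation.ReflTransGen.mono (p := fun a b => (a, b) ∈ A) (fun a b hh => hh.1) _ _ h'
        · have h2 : e.1 = m := by rw [← he]
          rw [← h2]; exact h1'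
      · have h2 : e.2 = t' := by rw [← he]
        rw [h2]
    · rcases ih with h' | ⟨h1', h2'⟩
      · exact Or.inl (h'.tail ⟨harc, he⟩)
      · exact Or.inr ⟨h1', h2'.tail ⟨harc, he⟩⟩

private lemma reaches_root (N : PhyloNetwork V L) {r : V} (hr : IsRoot N.arcs r) :
    ∀ w, Reaches N.arcs r w := by
  have : Finite V := N.vfin
  have hirr : IsIrrefl V (Relation.TransGen fun a b : V => (a, b) ∈ N.arcs) := by
    constructor
    intro x hx
    cases hx with
    | single h => exact N.acyclic _ _ h Relation.ReflTransGen.refl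
    | tail h1 h2 => exact N.acyclic _ _ h2 h1.to_reflTransGen
  have hwfT : WellFounded (Relation.TransGen fun a b : V => (a, b) ∈ N.arcs) :=
    Finite.wellFounded_of_trans_of_irrefl _
  have hwf : WellFounded (fun a b : V => (a, b) ∈ N.arcs) :=
    Subrelation.wf (fun h => Relation.TransGen.single h) hwfT
  intro w
  induction w using hwf.induction with
  | _ x IH =>
    by_cases hx : IsRoot N.arcs x
    · rw [N.root_unique r x hr hx]; exact Relation.ReflTransGen.refl
    · have hind : 1 ≤ indeg N.arcs x := by
        rcases N.vertex_type x with h | h | h | h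
        · exact absurd h hx
        · rw [h.1]
        · rw [h.1]; omega
        · rw [h.1]
      have hne : {p | (p, x) ∈ N.arcs}.Nonempty := by
        rcases Set.eq_empty_or_nonempty {p | (p, x) ∈ N.arcs} with h | h
        · exfalso; unfold indeg at hind; rw [h] at hind; simp at hind
        · exact h
      obtain ⟨p, hp⟩ := hne
      exact (IH p hp).tail hp

/-- If a network `N` is consistent with a triplet set `T` (with
`L(T) = L(N)`) then the set of leaves below any cut-arc of `N` is an SN-set of `T`. -/
theorem leaves_below_cutarc_SNset (V L : Type) (N : PhyloNetwork V L)
    (T : Set (L × L × L)) (hcons : ConsistentSet N T)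
    (hleaves : tripletLeaves T = leafSet N)
    (a : V × V) (hcut : CutArc N.arcs a) :
    SNSet T (leavesBelowV N a.2) := by
  classical
  constructor
  · intro x hx
    rw [hleaves]
    obtain ⟨w, hw, _, hlabw⟩ := hx
    exact ⟨w, hw, hlabw⟩
  · rintro ⟨x, y, z, hT, hx, hz, hy⟩
    obtain ⟨av, bv, cv, hLa, hLb, hLc, hla, hlb, hlc, hab, hac, hbc, p, q, hpq,
      Pqx, Pqy, Ppq, Ppz, hQX, hQY, hPQ, hPZ, dXY, dXQ, dXZ, dYQ, dYZ, dQZ⟩ :=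
      hcons (x, y, z) hT
    set A := N.arcs with hA
    -- identify the leaves below a.2 with av, cv
    have hreach_a : Reaches A a.2 av := by
      obtain ⟨w, hwL, hwr, hwlab⟩ := hx
      rwa [N.lab_inj w av hwL hLa (hwlab.trans hla.symm)] at hwr
    have hreach_c : Reaches A a.2 cv := by
      obtain ⟨w, hwL, hwr, hwlab⟩ := hz
      rwa [N.lab_inj w cv hwL hLc (hwlab.trans hlc.symm)] at hwr
    have hnb : ¬ Reaches A a.2 bv := fun h => hy ⟨bv, hLb, h, hlb⟩
    obtain ⟨r, hr⟩ := N.root_ex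
    have hroot := reaches_root N hr
    set R' : V → V → Prop := fun s t => (s, t) ∈ A ∧ (s, t) ≠ a with hR'
    have hR'sub : ∀ {s t : V}, Relation.ReflTransGen R' s t →
        Relation.ReflTransGen (UAdj (A \ {a})) s t := by
      intro s t h
      exact Relation.ReflTransGen.mono (p := UAdj (A \ {a}))
        (fun u w hh => Or.inl ⟨hh.1, by simpa using hh.2⟩) _ _ h
    have corA : ∀ {t : V}, Reaches A a.2 t → Relation.ReflTransGen R' a.2 t := by
      intro t h
      exact (reach_split a h).resolve_right
        (fun hh => N.acyclic a.1 a.2 hcut.1 hh.1)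
    have corB : ∀ {s t : V}, ¬ Reaches A a.2 t → Reaches A s t →
        Relation.ReflTransGen R' s t := by
      intro s t hn h
      exact (reach_split a h).resolve_right
        (fun hh => hn (Relation.ReflTransGen.mono (p := fun a b => (a, b) ∈ A)
          (fun _ _ h' => h'.1) _ _ hh.2))
    have usym : Symmetric (UAdj (A \ {a})) := fun _ _ h => h.symm
    have csymm : ∀ {x y : V}, Relation.ReflTransGen (UAdj (A \ {a})) x y →
        Relation.ReflTransGen (UAdj (A \ {a})) y x := by
      intro x y h
      induction h with
      | refl => exact Relation.ReflTransGen.refl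
      | tail _ hbc ih => exact Relation.ReflTransGen.head (usym hbc) ih
    have hrv : ¬ Relation.ReflTransGen (UAdj (A \ {a})) r a.2 := by
      intro h
      apply hcut.2
      have key : ∀ w, Relation.ReflTransGen (UAdj (A \ {a})) r w := by
        intro w
        by_cases hvw : Reaches A a.2 w
        · exact h.trans (hR'sub (corA hvw))
        · exact hR'sub (corB hvw (hroot w))
      intro s t
      exact (csymm (key s)).trans (key t)
    -- basic path facts
    have hq_mem : q ∈ Pqy := List.mem_of_mem_head? hQY.2.1
    have hreach_qb : Reaches A q bv := chain_reach Pqy q bv hQY.1.2.2 hq_mem hQY.2.2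
    have hv_not_Pqy : a.2 ∉ Pqy := fun hm =>
      hnb (chain_reach Pqy a.2 bv hQY.1.2.2 hm hQY.2.2)
    have hconn_qb : Relation.ReflTransGen (UAdj (A \ {a})) q bv :=
      hR'sub (chain_reach_avoid a Pqy q bv hQY.1.2.2 hv_not_Pqy hQY.2.1 hQY.2.2)
    have hrb : Relation.ReflTransGen (UAdj (A \ {a})) r bv :=
      hR'sub (corB hnb (hroot bv))
    have hConn_rq : Relation.ReflTransGen (UAdj (A \ {a})) r q :=
      hrb.trans (csymm hconn_qb)
    have hp_mem : p ∈ Ppq := List.mem_of_mem_head? hPQ.2.1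
    have hreach_pq : Reaches A p q := chain_reach Ppq p q hPQ.1.2.2 hp_mem hPQ.2.2
    have hv_not_Ppq : a.2 ∉ Ppq := fun hm =>
      hnb ((chain_reach Ppq a.2 q hPQ.1.2.2 hm hPQ.2.2).trans hreach_qb)
    have hconn_pq : Relation.ReflTransGen (UAdj (A \ {a})) p q :=
      hR'sub (chain_reach_avoid a Ppq p q hPQ.1.2.2 hv_not_Ppq hPQ.2.1 hPQ.2.2)
    have hConn_rp : Relation.ReflTransGen (UAdj (A \ {a})) r p :=
      hConn_rq.trans (csymm hconn_pq)
    -- v must lie on both Pqx and Ppz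
    have hv_in_Pqx : a.2 ∈ Pqx := by
      by_contra hnot
      have h1 : Relation.ReflTransGen (UAdj (A \ {a})) q av :=
        hR'sub (chain_reach_avoid a Pqx q av hQX.1.2.2 hnot hQX.2.1 hQX.2.2)
      have h2 : Relation.ReflTransGen (UAdj (A \ {a})) a.2 av :=
        hR'sub (corA hreach_a)
      exact hrv ((hConn_rq.trans h1).trans (csymm h2))
    have hv_in_Ppz : a.2 ∈ Ppz := by
      by_contra hnot
      have h1 : Relation.ReflTransGen (UAdj (A \ {a})) p cv :=
        hR'sub (chain_reach_avoid a Ppz p cv hPZ.1.2.2 hnot hPZ.2.1 hPZ.2.2)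
      have h2 : Relation.ReflTransGen (UAdj (A \ {a})) a.2 cv :=
        hR'sub (corA hreach_c)
      exact hrv ((hConn_rp.trans h1).trans (csymm h2))
    obtain ⟨hEx, hEz⟩ := dXZ a.2 hv_in_Pqx hv_in_Ppz
    have hva : a.2 = av := by
      rcases hEx with h | h
      · have : a.2 = q := by
          rw [hQX.2.1] at h; exact (Option.some.injEq _ _ ▸ h.symm : _)
        exact absurd (this ▸ hreach_qb) hnb
      · rw [hQX.2.2] at h
        exact Option.some.inj h.symm
    have hvc : a.2 = cv := by
      rcases hEz with h | h
      · have hvp : a.2 = p := by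
          rw [hPZ.2.1] at h; exact Option.some.inj h.symm
        exact absurd (hvp ▸ (hreach_pq.trans hreach_qb)) hnb
      · rw [hPZ.2.2] at h
        exact Option.some.inj h.symm
    exact hac (hva ▸ hvc)

end Phylo
end

section
/- For every phylogenetic network N and every three distinct leaves x, y, z of N, at least one of the triplets xy|z, xz|y, yz|x is consistent with N; consequently, the triplet set T(N) is dense, and in particular every reflective triplet set is dense. -/
/-!
Common definitions for formalizing "Constructing the Simplest Possible
Phylogenetic Network from Triplets" (van Iersel, Kelk).

A directed graph on a vertex type `V` is given by its arc set `A : Set (V × V)`.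
-/

namespace Phylo

variable {V L : Type}

/-! ### Auxiliary lemmas for Statement 9 -/

section Aux

variable {V : Type} {A : Set (V × V)}

private lemma no_cycle (hA : Acyclic A) {u v : V}
    (h : Relation.TransGen (fun x y => (x, y) ∈ A) u v) (h2 : Reaches A v u) : False := by
  rcases Relation.TransGen.head'_iff.1 h with ⟨s, hs, hsv⟩
  exact hA u s hs (Relation.ReflTransGen.trans hsv h2)

private lemma reach_antisymm (hA : Acyclic A) {u v : V}
    (h1 : Reaches A u v) (h2 : Reaches A v u) : u = v := by
  rcases Relation.ReflTransGen.cases_head h1 with h | ⟨s, hs, hsv⟩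
  · exact h
  · exact absurd (Relation.ReflTransGen.trans hsv h2) (hA u s hs)

private lemma transGen_of_reaches_ne {u v : V} (h : Reaches A u v) (hne : v ≠ u) :
    Relation.TransGen (fun x y => (x, y) ∈ A) u v :=
  (Relation.reflTransGen_iff_eq_or_transGen.1 h).resolve_left hne

private lemma transGen_wf_rev [Finite V] (hA : Acyclic A) :
    WellFounded (fun u v : V => Relation.TransGen (fun x y => (x, y) ∈ A) v u) := by
  haveI : IsTrans V (fun u v : V => Relation.TransGen (fun x y => (x, y) ∈ A) v u) :=
    ⟨fun _ _ _ h1 h2 => h2.trans h1⟩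
  haveI : IsIrrefl V (fun u v : V => Relation.TransGen (fun x y => (x, y) ∈ A) v u) :=
    ⟨fun a h => no_cycle hA h Relation.ReflTransGen.refl⟩
  exact Finite.wellFounded_of_trans_of_irrefl _

private lemma arc_wf [Finite V] (hA : Acyclic A) :
    WellFounded (fun u v : V => (u, v) ∈ A) := by
  have h1 : WellFounded (fun u v : V => Relation.TransGen (fun x y => (x, y) ∈ A) u v) := by
    haveI : IsTrans V (fun u v : V => Relation.TransGen (fun x y => (x, y) ∈ A) u v) :=
      ⟨fun _ _ _ h1 h2 => h1.trans h2⟩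
    haveI : IsIrrefl V (fun u v : V => Relation.TransGen (fun x y => (x, y) ∈ A) u v) :=
      ⟨fun a h => no_cycle hA h Relation.ReflTransGen.refl⟩
    exact Finite.wellFounded_of_trans_of_irrefl _
  exact Subrelation.wf (fun h => Relation.TransGen.single h) h1

private lemma chain'_head_reaches {R : V → V → Prop} :
    ∀ (l : List V), l.Chain' R → ∀ u w, l.head? = some u → w ∈ l →
      Relation.ReflTransGen R u w := by
  intro l
  induction l with
  | nil => intro _ u w h hw; cases hw
  | cons a l ih =>
    intro hc u w hu hw
    have hau : a = u := by simpa using hu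
    subst hau
    rcases List.mem_cons.1 hw with rfl | hw
    · exact Relation.ReflTransGen.refl
    · cases l with
      | nil => cases hw
      | cons b l' =>
        have h1 := List.isChain_cons_cons.1 hc
        exact Relation.ReflTransGen.head h1.1 (ih h1.2 b w rfl hw)

private lemma chain'_last_reaches {R : V → V → Prop} :
    ∀ (l : List V), l.Chain' R → ∀ v w, l.getLast? = some v → w ∈ l →
      Relation.ReflTransGen R w v := by
  intro l
  induction l with
  | nil => intro _ v w h hw; cases hw
  | cons a l ih =>
    intro hc v w hv hw
    cases l with
    | nil =>
      have hav : a = v := by simpa using hv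
      have haw : w = a := by simpa using hw
      subst hav; subst haw
      exact Relation.ReflTransGen.refl
    | cons b l' =>
      have h1 := List.isChain_cons_cons.1 hc
      have hv' : (b :: l').getLast? = some v := by
        simpa [List.getLast?_cons_cons] using hv
      rcases List.mem_cons.1 hw with rfl | hw
      · exact Relation.ReflTransGen.head h1.1
          (ih h1.2 v b hv' List.mem_cons_self)
      · exact ih h1.2 v w hv' hw

private lemma path_mem_reaches {l : List V} {u v w : V}
    (h : IsPathFromTo A l u v) (hw : w ∈ l) : Reaches A u w ∧ Reaches A w v :=
  ⟨chain'_head_reaches l h.1.2.2 u w h.2.1 hw,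
   chain'_last_reaches l h.1.2.2 v w h.2.2 hw⟩

private lemma exists_path {u v : V} (h : Reaches A u v) :
    ∃ l, IsPathFromTo A l u v := by
  refine Relation.ReflTransGen.head_induction_on h ?_ ?_
  · exact ⟨[v], ⟨by simp, by simp, List.isChain_singleton _⟩, by simp, by simp⟩
  · intro x s hxs hsv ih
    obtain ⟨l, hl⟩ := ih
    cases l with
    | nil => simp [IsPathFromTo] at hl
    | cons hd tl =>
      have hhd : hd = s := by simpa using hl.2.1
      subst hhd
      by_cases hx : x ∈ hd :: tl
      · obtain ⟨l₁, l₂, heq⟩ := List.append_of_mem hx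
        have hnd : (hd :: tl).Nodup := hl.1.2.1
        have hch : (hd :: tl).Chain' (fun a b => (a, b) ∈ A) := hl.1.2.2
        have hlast : (hd :: tl).getLast? = some v := hl.2.2
        rw [heq] at hnd hch hlast
        refine ⟨x :: l₂, ⟨by simp, ?_, ?_⟩, rfl, ?_⟩
        · exact List.Nodup.sublist (List.sublist_append_right l₁ (x :: l₂)) hnd
        · exact List.IsChain.suffix hch ⟨l₁, rfl⟩
        · rw [List.getLast?_append] at hlast
          cases hgl : (x :: l₂).getLast? with
          | none => simp [List.getLast?_eq_none_iff] at hgl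
          | some y =>
            rw [hgl] at hlast
            simpa using hlast
      · refine ⟨x :: hd :: tl, ⟨by simp, ?_, ?_⟩, rfl, ?_⟩
        · exact List.nodup_cons.2 ⟨hx, hl.1.2.1⟩
        · exact List.isChain_cons_cons.2 ⟨hxs, hl.1.2.2⟩
        · rw [List.getLast?_cons_cons]
          exact hl.2.2

private lemma no_arc_of_outdeg_zero [Finite V] {v : V} (h : outdeg A v = 0) {w : V} :
    (v, w) ∉ A := by
  intro hw
  have h2 : {w | (v, w) ∈ A} = ∅ := (Set.ncard_eq_zero (Set.toFinite _)).1 h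
  have hw' : w ∈ {w | (v, w) ∈ A} := hw
  rw [h2] at hw'
  exact hw'

private lemma reaches_leaf_eq [Finite V] {v w : V} (h : outdeg A v = 0)
    (hr : Reaches A v w) : w = v := by
  rcases Relation.ReflTransGen.cases_head hr with h' | ⟨s, hs, _⟩
  · exact h'.symm
  · exact absurd hs (no_arc_of_outdeg_zero h)

private lemma exists_parent {v : V} (h : indeg A v ≠ 0) : ∃ u, (u, v) ∈ A :=
  Set.nonempty_of_ncard_ne_zero h

end Aux

section Net

variable {V L : Type}

private lemma root_reaches (N : PhyloNetwork V L) {r : V} (hr : IsRoot N.arcs r)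
    (v : V) : Reaches N.arcs r v := by
  haveI := N.vfin
  refine (arc_wf N.acyclic).induction v ?_
  intro v ih
  rcases N.vertex_type v with h | h | h | h
  · have := N.root_unique r v hr h
    subst this
    exact Relation.ReflTransGen.refl
  · obtain ⟨p, hp⟩ := exists_parent (A := N.arcs) (by rw [h.1]; exact one_ne_zero)
    exact Relation.ReflTransGen.tail (ih p hp) hp
  · obtain ⟨p, hp⟩ := exists_parent (A := N.arcs) (by rw [h.1]; exact two_ne_zero)
    exact Relation.ReflTransGen.tail (ih p hp) hp
  · obtain ⟨p, hp⟩ := exists_parent (A := N.arcs) (by rw [h.1]; exact one_ne_zero)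
    exact Relation.ReflTransGen.tail (ih p hp) hp

/-- Core construction: if `q` reaches `a` and `b` but not `c`, and is minimal among
vertices reaching two of the three leaves, then there is an embedding of `ab|c`. -/
private lemma core (N : PhyloNetwork V L) (a b c q : V)
    (hqa : Reaches N.arcs q a) (hqb : Reaches N.arcs q b)
    (hqc : ¬ Reaches N.arcs q c)
    (hmab : ∀ w, Relation.TransGen (fun x y => (x, y) ∈ N.arcs) q w →
      ¬(Reaches N.arcs w a ∧ Reaches N.arcs w b))
    (hmac : ∀ w, Relation.TransGen (fun x y => (x, y) ∈ N.arcs) q w →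
      ¬(Reaches N.arcs w a ∧ Reaches N.arcs w c))
    (hmbc : ∀ w, Relation.TransGen (fun x y => (x, y) ∈ N.arcs) q w →
      ¬(Reaches N.arcs w b ∧ Reaches N.arcs w c)) :
    ∃ p, HasEmbedding N.arcs p q a b c := by
  haveI := N.vfin
  obtain ⟨r, hr⟩ := N.root_ex
  obtain ⟨p, hp, hpmin⟩ := (transGen_wf_rev N.acyclic).has_min
    {v | Reaches N.arcs v q ∧ Reaches N.arcs v c}
    ⟨r, root_reaches N hr q, root_reaches N hr c⟩
  obtain ⟨hpq, hpc⟩ := hp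
  have hpneq : p ≠ q := fun h => hqc (h ▸ hpc)
  obtain ⟨P1, hP1⟩ := exists_path hqa
  obtain ⟨P2, hP2⟩ := exists_path hqb
  obtain ⟨P3, hP3⟩ := exists_path hpq
  obtain ⟨P4, hP4⟩ := exists_path hpc
  have mem12 : ∀ w, w ∈ P1 → w ∈ P2 → w = q := by
    intro w h1 h2
    obtain ⟨hqw, hwa⟩ := path_mem_reaches hP1 h1
    obtain ⟨_, hwb⟩ := path_mem_reaches hP2 h2
    by_contra hne
    exact hmab w (transGen_of_reaches_ne hqw hne) ⟨hwa, hwb⟩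
  have mem13 : ∀ w, w ∈ P1 → w ∈ P3 → w = q := by
    intro w h1 h3
    obtain ⟨hqw, _⟩ := path_mem_reaches hP1 h1
    obtain ⟨_, hwq⟩ := path_mem_reaches hP3 h3
    exact (reach_antisymm N.acyclic hqw hwq).symm
  have mem23 : ∀ w, w ∈ P2 → w ∈ P3 → w = q := by
    intro w h2 h3
    obtain ⟨hqw, _⟩ := path_mem_reaches hP2 h2
    obtain ⟨_, hwq⟩ := path_mem_reaches hP3 h3
    exact (reach_antisymm N.acyclic hqw hwq).symm
  have mem14 : ∀ w, w ∈ P1 → w ∈ P4 → False := by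
    intro w h1 h4
    obtain ⟨hqw, hwa⟩ := path_mem_reaches hP1 h1
    obtain ⟨_, hwc⟩ := path_mem_reaches hP4 h4
    by_cases hne : w = q
    · exact hqc (hne ▸ hwc)
    · exact hmac w (transGen_of_reaches_ne hqw hne) ⟨hwa, hwc⟩
  have mem24 : ∀ w, w ∈ P2 → w ∈ P4 → False := by
    intro w h2 h4
    obtain ⟨hqw, hwb⟩ := path_mem_reaches hP2 h2
    obtain ⟨_, hwc⟩ := path_mem_reaches hP4 h4
    by_cases hne : w = q
    · exact hqc (hne ▸ hwc)
    · exact hmbc w (transGen_of_reaches_ne hqw hne) ⟨hwb, hwc⟩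
  have mem34 : ∀ w, w ∈ P3 → w ∈ P4 → w = p := by
    intro w h3 h4
    obtain ⟨hpw, hwq⟩ := path_mem_reaches hP3 h3
    obtain ⟨_, hwc⟩ := path_mem_reaches hP4 h4
    by_contra hne
    exact hpmin w ⟨hwq, hwc⟩ (transGen_of_reaches_ne hpw hne)
  refine ⟨p, hpneq, P1, P2, P3, P4, hP1, hP2, hP3, hP4, ?_, ?_, ?_, ?_, ?_, ?_⟩
  · intro w h1 h2
    have := mem12 w h1 h2; subst this
    exact ⟨Or.inl hP1.2.1, Or.inl hP2.2.1⟩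
  · intro w h1 h3
    have := mem13 w h1 h3; subst this
    exact ⟨Or.inl hP1.2.1, Or.inr hP3.2.2⟩
  · intro w h1 h4
    exact absurd (mem14 w h1 h4) not_false
  · intro w h2 h3
    have := mem23 w h2 h3; subst this
    exact ⟨Or.inl hP2.2.1, Or.inr hP3.2.2⟩
  · intro w h2 h4
    exact absurd (mem24 w h2 h4) not_false
  · intro w h3 h4
    have := mem34 w h3 h4; subst this
    exact ⟨Or.inl hP3.2.1, Or.inl hP4.2.1⟩

/-- Main combinatorial lemma: for three distinct leaf vertices, some triplet on
them has an embedding. -/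
private lemma main_embed (N : PhyloNetwork V L) (a b c : V)
    (ha : IsLeafV N.arcs a) (hb : IsLeafV N.arcs b) (hc : IsLeafV N.arcs c)
    (hab : a ≠ b) (hac : a ≠ c) (hbc : b ≠ c) :
    (∃ p q, HasEmbedding N.arcs p q a b c) ∨
    (∃ p q, HasEmbedding N.arcs p q a c b) ∨
    (∃ p q, HasEmbedding N.arcs p q b c a) := by
  haveI := N.vfin
  obtain ⟨r, hr⟩ := N.root_ex
  set S₂ : Set V := {v | (Reaches N.arcs v a ∧ Reaches N.arcs v b) ∨
      (Reaches N.arcs v a ∧ Reaches N.arcs v c) ∨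
      (Reaches N.arcs v b ∧ Reaches N.arcs v c)} with hS₂
  obtain ⟨q, hqS, hqmin⟩ := (transGen_wf_rev N.acyclic).has_min S₂
    ⟨r, Or.inl ⟨root_reaches N hr a, root_reaches N hr b⟩⟩
  have hmab : ∀ w, Relation.TransGen (fun x y => (x, y) ∈ N.arcs) q w →
      ¬(Reaches N.arcs w a ∧ Reaches N.arcs w b) :=
    fun w tg h => hqmin w (Or.inl h) tg
  have hmac : ∀ w, Relation.TransGen (fun x y => (x, y) ∈ N.arcs) q w →
      ¬(Reaches N.arcs w a ∧ Reaches N.arcs w c) :=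
    fun w tg h => hqmin w (Or.inr (Or.inl h)) tg
  have hmbc : ∀ w, Relation.TransGen (fun x y => (x, y) ∈ N.arcs) q w →
      ¬(Reaches N.arcs w b ∧ Reaches N.arcs w c) :=
    fun w tg h => hqmin w (Or.inr (Or.inr h)) tg
  have hnot : ¬(Reaches N.arcs q a ∧ Reaches N.arcs q b ∧ Reaches N.arcs q c) := by
    rintro ⟨ra, rb, rc⟩
    have hqa : q ≠ a := by rintro rfl; exact hab (reaches_leaf_eq ha.2 rb).symm
    have hqb : q ≠ b := by rintro rfl; exact hab (reaches_leaf_eq hb.2 ra)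
    have hqc : q ≠ c := by rintro rfl; exact hac (reaches_leaf_eq hc.2 ra)
    obtain ⟨ua, hua, rua⟩ := (Relation.ReflTransGen.cases_head ra).resolve_left hqa
    obtain ⟨ub, hub, rub⟩ := (Relation.ReflTransGen.cases_head rb).resolve_left hqb
    obtain ⟨uc, huc, ruc⟩ := (Relation.ReflTransGen.cases_head rc).resolve_left hqc
    by_cases e1 : ua = ub
    · exact hmab ua (Relation.TransGen.single hua) ⟨rua, by rw [e1]; exact rub⟩
    by_cases e2 : ua = uc
    · exact hmac ua (Relation.TransGen.single hua) ⟨rua, by rw [e2]; exact ruc⟩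
    have hbceq : ub = uc := by
      rcases N.vertex_type q with hq | hq | hq | hq
      · obtain ⟨s, t, hst, hC⟩ := Set.ncard_eq_two.1 hq.2
        have ma : ua ∈ {w | (q, w) ∈ N.arcs} := hua
        have mb : ub ∈ {w | (q, w) ∈ N.arcs} := hub
        have mc : uc ∈ {w | (q, w) ∈ N.arcs} := huc
        rw [hC] at ma mb mc
        simp only [Set.mem_insert_iff, Set.mem_singleton_iff] at ma mb mc
        rcases ma with h | h <;> rcases mb with h' | h' <;> rcases mc with h'' | h'' <;>
          simp_all
      · obtain ⟨s, t, hst, hC⟩ := Set.ncard_eq_two.1 hq.2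
        have ma : ua ∈ {w | (q, w) ∈ N.arcs} := hua
        have mb : ub ∈ {w | (q, w) ∈ N.arcs} := hub
        have mc : uc ∈ {w | (q, w) ∈ N.arcs} := huc
        rw [hC] at ma mb mc
        simp only [Set.mem_insert_iff, Set.mem_singleton_iff] at ma mb mc
        rcases ma with h | h <;> rcases mb with h' | h' <;> rcases mc with h'' | h'' <;>
          simp_all
      · obtain ⟨s, hC⟩ := Set.ncard_eq_one.1 hq.2
        have ma : ua ∈ {w | (q, w) ∈ N.arcs} := hua
        have mb : ub ∈ {w | (q, w) ∈ N.arcs} := hub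
        rw [hC] at ma mb
        simp only [Set.mem_singleton_iff] at ma mb
        exact absurd (ma.trans mb.symm) e1
      · exact absurd hua (no_arc_of_outdeg_zero hq.2)
    exact hmbc ub (Relation.TransGen.single hub) ⟨rub, by rw [hbceq]; exact ruc⟩
  rcases hqS with ⟨ra, rb⟩ | ⟨ra, rc⟩ | ⟨rb, rc⟩
  · have hqc : ¬ Reaches N.arcs q c := fun rc => hnot ⟨ra, rb, rc⟩
    obtain ⟨p, hp⟩ := core N a b c q ra rb hqc hmab hmac hmbc
    exact Or.inl ⟨p, q, hp⟩
  · have hqb : ¬ Reaches N.arcs q b := fun rb => hnot ⟨ra, rb, rc⟩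
    obtain ⟨p, hp⟩ := core N a c b q ra rc hqb hmac hmab
      (fun w tg h => hmbc w tg ⟨h.2, h.1⟩)
    exact Or.inr (Or.inl ⟨p, q, hp⟩)
  · have hqa : ¬ Reaches N.arcs q a := fun ra => hnot ⟨ra, rb, rc⟩
    obtain ⟨p, hp⟩ := core N b c a q rb rc hqa hmbc
      (fun w tg h => hmab w tg ⟨h.2, h.1⟩)
      (fun w tg h => hmac w tg ⟨h.2, h.1⟩)
    exact Or.inr (Or.inr ⟨p, q, hp⟩)

/-- Statement 9, first part, as a standalone lemma. -/
private lemma triplet_of_leaves (N : PhyloNetwork V L) :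
    ∀ x y z : L, x ∈ leafSet N → y ∈ leafSet N → z ∈ leafSet N →
      x ≠ y → x ≠ z → y ≠ z →
      ConsistentT N x y z ∨ ConsistentT N x z y ∨ ConsistentT N y z x := by
  intro x y z hx hy hz hxy hxz hyz
  obtain ⟨a, ha, rfl⟩ := hx
  obtain ⟨b, hb, rfl⟩ := hy
  obtain ⟨c, hc, rfl⟩ := hz
  have hab : a ≠ b := fun h => hxy (by rw [h])
  have hac : a ≠ c := fun h => hxz (by rw [h])
  have hbc : b ≠ c := fun h => hyz (by rw [h])
  rcases main_embed N a b c ha hb hc hab hac hbc with ⟨p, q, hemb⟩ | ⟨p, q, hemb⟩ | ⟨p, q, hemb⟩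
  · exact Or.inl ⟨a, b, c, ha, hb, hc, rfl, rfl, rfl, hab, hac, hbc, p, q, hemb⟩
  · exact Or.inr (Or.inl ⟨a, c, b, ha, hc, hb, rfl, rfl, rfl, hac, hab, hbc.symm, p, q, hemb⟩)
  · exact Or.inr (Or.inr ⟨b, c, a, hb, hc, ha, rfl, rfl, rfl, hbc, hab.symm, hac.symm, p, q, hemb⟩)

private lemma mem_leafSet_of_tripletLeaves (N : PhyloNetwork V L) {x : L}
    (hx : x ∈ tripletLeaves (TN N)) : x ∈ leafSet N := by
  obtain ⟨t, ht, h⟩ := hx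
  obtain ⟨a, b, c, ha, hb, hc, ea, eb, ec, -⟩ := ht
  rcases h with rfl | rfl | rfl
  · exact ⟨a, ha, ea⟩
  · exact ⟨b, hb, eb⟩
  · exact ⟨c, hc, ec⟩

/-- Statement 9, second part, as a standalone lemma. -/
private lemma dense_TN (N : PhyloNetwork V L) : DenseT (TN N) := by
  intro x hx y hy z hz hxy hxz hyz
  exact triplet_of_leaves N x y z (mem_leafSet_of_tripletLeaves N hx)
    (mem_leafSet_of_tripletLeaves N hy) (mem_leafSet_of_tripletLeaves N hz) hxy hxz hyz

end Net

/-- For every phylogenetic network `N` and every three distinct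
leaves `x, y, z`, at least one of `xy|z`, `xz|y`, `yz|x` is consistent with `N`;
consequently `T(N)` is dense, and every reflective triplet set is dense. -/
theorem network_triplets_dense (V L : Type) (N : PhyloNetwork V L) :
    (∀ x y z : L, x ∈ leafSet N → y ∈ leafSet N → z ∈ leafSet N →
      x ≠ y → x ≠ z → y ≠ z →
      ConsistentT N x y z ∨ ConsistentT N x z y ∨ ConsistentT N y z x) ∧
    DenseT (TN N) ∧
    (∀ (L' : Type) (T : Set (L' × L' × L')),
      (∃ (V' : Type) (N' : PhyloNetwork V' L'), Reflects N' T) → DenseT T) := by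
  refine ⟨triplet_of_leaves N, dense_TN N, ?_⟩
  rintro L' T ⟨V', N', h⟩
  exact h ▸ dense_TN N'


end Phylo
end

section
/- Let T be a dense triplet set with |L(T)| = n ≥ 2. Then T has at most 2(n−1) nontrivial SN-sets. -/
/-!
Common definitions for formalizing "Constructing the Simplest Possible
Phylogenetic Network from Triplets" (van Iersel, Kelk).

A directed graph on a vertex type `V` is given by its arc set `A : Set (V × V)`.
-/

namespace Phylo

variable {V L : Type}

private lemma laminar_bound {L : Type} : ∀ n : ℕ, ∀ U : Set L, U.Finite → U.ncard = n →
    ∀ F : Set (Set L), (∀ S ∈ F, S.Nonempty ∧ S ⊆ U) →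
    (∀ S1 ∈ F, ∀ S2 ∈ F, S1 ⊆ S2 ∨ S2 ⊆ S1 ∨ Disjoint S1 S2) →
    F.ncard ≤ 2 * n - 1 := by
  intro n
  induction n using Nat.strong_induction_on with
  | _ n IH =>
    intro U hU hUn F hmem hlam
    have hFfin : F.Finite := hU.finite_subsets.subset (fun S hS => (hmem S hS).2)
    by_cases hsub : F ⊆ {U}
    · rcases F.eq_empty_or_nonempty with h | ⟨S, hS⟩
      · simp [h]
      · have hSU : S = U := hsub hS
        have hn1 : 1 ≤ n := by
          rw [← hUn]
          have : U.Nonempty := hSU ▸ (hmem S hS).1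
          exact (Set.ncard_pos hU).mpr this
        have : F.ncard ≤ ({U} : Set (Set L)).ncard := Set.ncard_le_ncard hsub (Set.finite_singleton U)
        simp only [Set.ncard_singleton] at this
        omega
    · -- pick a maximal element of F \ {U}
      have hne : (F \ {U}).Nonempty := by
        rw [Set.not_subset] at hsub
        obtain ⟨S, hS, hSne⟩ := hsub
        exact ⟨S, hS, hSne⟩
      obtain ⟨S, hS, hmax⟩ := Set.Finite.exists_maximalFor id (F \ {U})
        (hFfin.subset Set.diff_subset) hne
      have hSF : S ∈ F := hS.1
      have hSneU : S ≠ U := hS.2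
      have hSU : S ⊆ U := (hmem S hSF).2
      have hSnonempty : S.Nonempty := (hmem S hSF).1
      set F1 : Set (Set L) := {A ∈ F | A ⊆ S} with hF1
      set F2 : Set (Set L) := {A ∈ F | ¬ A ⊆ S} with hF2
      have hFsplit : F = F1 ∪ F2 := by
        ext A; by_cases h : A ⊆ S <;> simp [hF1, hF2, h]
      -- every member of F2 other than U is disjoint from S, hence ⊆ U \ S
      have hF2' : F2 \ {U} ⊆ {A | A.Nonempty ∧ A ⊆ U \ S} := by
        rintro A ⟨⟨hAF, hAnS⟩, hAneU⟩
        refine ⟨(hmem A hAF).1, ?_⟩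
        rcases hlam S hSF A hAF with h | h | h
        · exfalso
          have := hmax ⟨hAF, hAneU⟩ h
          simp only [id] at this
          exact hAnS this
        · exact absurd h hAnS
        · intro a ha
          exact ⟨(hmem A hAF).2 ha, fun haS => h.ne_of_mem haS ha rfl⟩
      have hScard : S.ncard < n := by
        rw [← hUn]
        exact Set.ncard_lt_ncard (HasSubset.Subset.ssubset_of_ne hSU hSneU) hU
      have hScard1 : 1 ≤ S.ncard := (Set.ncard_pos (hU.subset hSU)).mpr hSnonempty
      have hdiffcard : (U \ S).ncard = n - S.ncard := by
        rw [Set.ncard_diff hSU (hU.subset hSU), hUn]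
      have hdifflt : (U \ S).ncard < n := by omega
      have h1 : F1.ncard ≤ 2 * S.ncard - 1 := by
        refine IH S.ncard hScard S (hU.subset hSU) rfl F1 ?_ ?_
        · rintro A ⟨hAF, hAS⟩; exact ⟨(hmem A hAF).1, hAS⟩
        · rintro A ⟨hAF, _⟩ B ⟨hBF, _⟩; exact hlam A hAF B hBF
      have h2 : (F2 \ {U}).ncard ≤ 2 * (U \ S).ncard - 1 := by
        refine IH (U \ S).ncard hdifflt (U \ S) (hU.diff (t := S)) rfl (F2 \ {U}) ?_ ?_
        · intro A hA; exact hF2' hA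
        · rintro A ⟨⟨hAF, _⟩, _⟩ B ⟨⟨hBF, _⟩, _⟩; exact hlam A hAF B hBF
      have h2' : F2.ncard ≤ (F2 \ {U}).ncard + 1 := by
        have : F2 ⊆ insert U (F2 \ {U}) := by
          intro A hA; by_cases h : A = U
          · simp [h]
          · exact Set.mem_insert_of_mem _ ⟨hA, h⟩
        calc F2.ncard ≤ (insert U (F2 \ {U})).ncard :=
              Set.ncard_le_ncard this (((hFfin.subset (hFsplit ▸ Set.subset_union_right)).diff (t := _)).insert U)
          _ ≤ (F2 \ {U}).ncard + 1 := Set.ncard_insert_le _ _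
      have hUnion : F.ncard ≤ F1.ncard + F2.ncard := hFsplit ▸ Set.ncard_union_le F1 F2
      omega

private lemma SN_laminar {L : Type} {T : Set (L × L × L)} (hT : IsTripletSet T)
    (hdense : DenseT T) {S1 S2 : Set L} (h1 : SNSet T S1) (h2 : SNSet T S2) :
    S1 ⊆ S2 ∨ S2 ⊆ S1 ∨ Disjoint S1 S2 := by
  by_contra h
  push_neg at h
  obtain ⟨h12, h21, hdis⟩ := h
  rw [Set.not_subset] at h12 h21
  obtain ⟨a, haS1, haS2⟩ := h12
  obtain ⟨b, hbS2, hbS1⟩ := h21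
  rw [Set.not_disjoint_iff] at hdis
  obtain ⟨c, hcS1, hcS2⟩ := hdis
  have haU : a ∈ tripletLeaves T := h1.1 haS1
  have hbU : b ∈ tripletLeaves T := h2.1 hbS2
  have hcU : c ∈ tripletLeaves T := h1.1 hcS1
  have hab : a ≠ b := fun h => hbS1 (h ▸ haS1)
  have hac : a ≠ c := fun h => haS2 (h ▸ hcS2)
  have hbc : b ≠ c := fun h => hbS1 (h ▸ hcS1)
  rcases hdense a haU b hbU c hcU hab hac hbc with h | h | h
  · exact h1.2 ⟨a, b, c, h, haS1, hcS1, hbS1⟩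
  · have := (hT _ h).1
    exact h2.2 ⟨c, a, b, this, hcS2, hbS2, haS2⟩
  · have := (hT _ h).1
    exact h1.2 ⟨c, b, a, this, hcS1, haS1, hbS1⟩

/-- A dense triplet set on `n ≥ 2` leaves has at most `2(n-1)`
nontrivial SN-sets. -/
theorem count_nontrivial_SNsets (L : Type) (T : Set (L × L × L))
    (hT : IsTripletSet T) (hfin : (tripletLeaves T).Finite) (hdense : DenseT T)
    (n : ℕ) (hn : (tripletLeaves T).ncard = n) (h2 : 2 ≤ n) :
    {S : Set L | S.Nonempty ∧ SNSet T S ∧ S ≠ tripletLeaves T}.ncard ≤ 2 * (n - 1) := by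
  set U := tripletLeaves T with hUdef
  set F : Set (Set L) := {S : Set L | S.Nonempty ∧ SNSet T S ∧ S ≠ U} with hF
  have hUne : U.Nonempty := (Set.ncard_pos hfin).mp (by omega)
  have hUF : U ∉ F := fun h => h.2.2 rfl
  have hmem : ∀ S ∈ insert U F, S.Nonempty ∧ S ⊆ U := by
    rintro S (rfl | hS)
    · exact ⟨hUne, subset_refl _⟩
    · exact ⟨hS.1, hS.2.1.1⟩
  have hlam : ∀ S1 ∈ insert U F, ∀ S2 ∈ insert U F,
      S1 ⊆ S2 ∨ S2 ⊆ S1 ∨ Disjoint S1 S2 := by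
    rintro S1 (rfl | h1) S2 (rfl | h2)
    · left; rfl
    · right; left; exact h2.2.1.1
    · left; exact h1.2.1.1
    · exact SN_laminar hT hdense h1.2.1 h2.2.1
  have hbound : (insert U F).ncard ≤ 2 * n - 1 :=
    laminar_bound n U hfin hn (insert U F) hmem hlam
  have hFfin : F.Finite := hfin.finite_subsets.subset (fun S hS => hS.2.1.1)
  have : (insert U F).ncard = F.ncard + 1 := Set.ncard_insert_of_notMem hUF hFfin
  omega


end Phylo
end
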